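/- Rigidified parallelogram: let a, b > 0 and suppose points A, B, C, D, E, F ∈ ℝ^n satisfy |A−B| = a, |C−D| = a, |A−C| = b, |B−D| = b, |E−F| = b, |A−E| = |B−E| = a/2, and |C−F| = |D−F| = a/2. Then E = (A+B)/2, F = (C+D)/2, and ABDC is a parallelogram, i.e., B − A = D − C. -/
import Mathlib

theorem stmt7 {n : ℕ} (a b : ℝ) (ha : 0 < a) (hb : 0 < b)
    (A B C D E F : EuclideanSpace ℝ (Fin n))
    (hAB : dist A B = a) (hCD : dist C D = a)
    (hAC : dist A C = b) (hBD : dist B D = b) (hEF : dist E F = b)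
    (hAE : dist A E = a / 2) (hBE : dist B E = a / 2)
    (hCF : dist C F = a / 2) (hDF : dist D F = a / 2) : 
    E = midpoint ℝ A B ∧ F = midpoint ℝ C D ∧ B - A = D - C := by
  have hE : E = midpoint ℝ A B := by
    apply eq_midpoint_of_dist_eq_half
    · rw [hAB, hAE]
    · rw [dist_comm, hBE, hAB]
  have hF : F = midpoint ℝ C D := by
    apply eq_midpoint_of_dist_eq_half
    · rw [hCD, hCF]
    · rw [dist_comm, hDF, hCD]
  refine ⟨hE, hF, ?_⟩
  have key : A - C = B - D := by
    apply eq_of_norm_eq_of_norm_add_eq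
    · rw [← dist_eq_norm, ← dist_eq_norm, hAC, hBD]
    · have : dist E F = b := hEF
      rw [hE, hF] at this
      have hmid : (midpoint ℝ A B : EuclideanSpace ℝ (Fin n)) - midpoint ℝ C D
          = (2⁻¹ : ℝ) • ((A - C) + (B - D)) := by
        simp [midpoint_eq_smul_add, smul_add, smul_sub]
        abel
      rw [dist_eq_norm, hmid, norm_smul] at this
      rw [← dist_eq_norm, ← dist_eq_norm, hAC, hBD]
      have : ‖(A - C) + (B - D)‖ = 2 * b := by
        rw [show ((2:ℝ)*b) = 2 * (‖(2⁻¹:ℝ)‖ * ‖(A - C) + (B - D)‖) by rw [this]]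
        simp [norm_inv]
      linarith [this]
  exact sub_eq_sub_iff_sub_eq_sub.mp key.symm
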